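/- arXiv:2603.02058 — 2 statements merged into one kernel-verified Lean document; each statement's English description precedes it below -/
import Mathlib

section
/- A finite simple graph is chordal (every cycle of length at least 4 has a chord) if and only if it can be built inductively by starting from a single vertex and, at each step, adding one new vertex together with edges joining it to all vertices of some (possibly empty) clique of the current graph. -/
/-- A simple graph is chordal if every cycle of length at least 4 has a chord,
i.e. an edge of the graph joining two vertices of the cycle which is not an edge
of the cycle itself. -/
def SimpleGraph.IsChordal {V : Type*} (G : SimpleGraph V) : Prop :=
  ∀ (v : V) (c : G.Walk v v), c.IsCycle → 4 ≤ c.length →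
    ∃ u w : V, u ∈ c.support ∧ w ∈ c.support ∧ G.Adj u w ∧ s(u, w) ∉ c.edges

open SimpleGraph Walk

universe u

variable {V : Type u}

/-- The graph obtained by deleting a set of vertices (kept on the same vertex type). -/
def auxDelete (G : SimpleGraph V) (S : Set V) : SimpleGraph V where
  Adj x y := G.Adj x y ∧ x ∉ S ∧ y ∉ S
  symm := ⟨fun x y h => ⟨h.1.symm, h.2.2, h.2.1⟩⟩
  loopless := ⟨fun x h => G.loopless.irrefl x h.1⟩

variable {G : SimpleGraph V}



lemma auxDelete_le (S : Set V) : auxDelete G S ≤ G := fun _ _ h => h.1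

lemma aux_not_mem_of_reach {S : Set V} {a x : V} (ha : a ∉ S)
    (h : (auxDelete G S).Reachable a x) : x ∉ S := by
  obtain ⟨w⟩ := h.symm
  cases w with
  | nil => exact ha
  | cons h' _ => exact h'.2.1

lemma aux_delete_walk_support {D : Set V} : ∀ {x y : V} (w : (auxDelete G D).Walk x y)
    (z : V), z ∈ w.support → z = y ∨ z ∉ D := by
  intro x y w
  induction w with
  | nil => intro z hz; rw [Walk.support_nil, List.mem_singleton] at hz; exact Or.inl hz
  | cons h p ih =>
    intro z hz
    rw [Walk.support_cons, List.mem_cons] at hz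
    rcases hz with rfl | hz
    · exact Or.inr h.2.1
    · exact ih z hz

lemma aux_reach_of_not_mem_support {S : Set V} {s : V} :
    ∀ {x y : V} (w : (auxDelete G (S \ {s})).Walk x y), s ∉ w.support →
      (auxDelete G S).Reachable x y := by
  intro x y w
  induction w with
  | nil => exact fun _ => Reachable.refl _
  | @cons x z y h p ih =>
    intro hs
    rw [Walk.support_cons, List.mem_cons] at hs
    push_neg at hs
    have hxS : x ∉ S := fun hx => h.2.1 ⟨hx, fun he => hs.1 (Set.mem_singleton_iff.mp he).symm⟩
    have hzS : z ∉ S := by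
      intro hz
      refine h.2.2 ⟨hz, fun he => ?_⟩
      have hzs : z = s := Set.mem_singleton_iff.mp he
      exact hs.2 (hzs ▸ p.start_mem_support)
    exact (SimpleGraph.Adj.reachable
      (show (auxDelete G S).Adj x z from ⟨h.1, hxS, hzS⟩)).trans (ih hs.2)

/-- Decompose a nonempty walk from the end. -/
lemma aux_exists_concat {u v : V} (p : G.Walk u v) (h : ¬ p.Nil) :
    ∃ (y : V) (R : G.Walk u y) (ha : G.Adj y v), p = R.concat ha := by
  have h' : ¬ p.reverse.Nil := by
    rw [Walk.nil_iff_length_eq] at h ⊢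
    rwa [Walk.length_reverse]
  obtain ⟨y, ha, q, hq⟩ := Walk.not_nil_iff.mp h'
  refine ⟨y, q.reverse, ha.symm, ?_⟩
  rw [← p.reverse_reverse, hq, Walk.reverse_cons, Walk.concat_eq_append]


lemma aux_exists_adj_comp [DecidableEq V] {a b : V} (S : Finset V)
    (hsep : a ∉ S ∧ b ∉ S ∧ ¬(auxDelete G ↑S).Reachable a b)
    (hmin : ∀ T : Finset V, a ∉ T → b ∉ T → ¬(auxDelete G ↑T).Reachable a b →
      S.card ≤ T.card)
    {s : V} (hs : s ∈ S) :
    ∃ x : V, (auxDelete G ↑S).Reachable a x ∧ G.Adj x s := by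
  have hcard : (S.erase s).card < S.card := Finset.card_erase_lt_of_mem hs
  have hr : (auxDelete G ↑(S.erase s)).Reachable a b := by
    by_contra hnr
    have := hmin _ (fun h => hsep.1 (Finset.mem_of_mem_erase h))
      (fun h => hsep.2.1 (Finset.mem_of_mem_erase h)) hnr
    omega
  rw [Finset.coe_erase] at hr
  obtain ⟨w⟩ := hr
  have hsup : s ∈ w.support := by
    by_contra hns
    exact hsep.2.2 (aux_reach_of_not_mem_support w hns)
  have hcount := w.count_support_takeUntil_eq_one hsup
  have has : a ≠ s := fun h => hsep.1 (h ▸ hs)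
  have hnil : ¬ (w.takeUntil s hsup).Nil := by
    intro h; rw [Walk.nil_iff_length_eq] at h
    exact has (Walk.eq_of_length_eq_zero (p := w.takeUntil s hsup) h)
  obtain ⟨y, R, h3, hRW⟩ := aux_exists_concat (w.takeUntil s hsup) hnil
  have hsR : s ∉ R.support := by
    intro hmem
    rw [hRW, Walk.support_concat, List.count_append] at hcount
    have h1 : 1 ≤ R.support.count s := List.one_le_count_iff.mpr hmem
    simp at hcount
    omega
  exact ⟨y, aux_reach_of_not_mem_support R hsR, h3.1⟩

/-- A walk of length one consists of a single edge. -/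
lemma aux_edges_of_length_one {u v : V} (p : G.Walk u v) (h : p.length = 1) :
    p.edges = [s(u, v)] := by
  cases p with
  | nil => simp at h
  | cons h' q =>
    cases q with
    | nil => simp
    | cons h'' r => simp [Walk.length_cons] at h

/-- On a minimum-length walk, adjacent support vertices are joined by a walk edge. -/
lemma aux_mem_edges_of_adj [DecidableEq V] {s t : V} (p : G.Walk s t)
    (hmin : ∀ q : G.Walk s t, p.length ≤ q.length) {u w : V}
    (hu : u ∈ p.support) (hw : w ∈ p.support) (h : G.Adj u w) :
    s(u, w) ∈ p.edges := by
  by_contra hne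
  have hspec := p.take_spec hu
  have hw' : w ∈ (p.takeUntil u hu).support ∨ w ∈ (p.dropUntil u hu).support := by
    rw [← Walk.mem_support_append_iff, hspec]; exact hw
  have hlen : (p.takeUntil u hu).length + (p.dropUntil u hu).length = p.length := by
    rw [← Walk.length_append, hspec]
  rcases hw' with hw1 | hw2
  · -- w occurs in the first part, before u
    set p0 := (p.takeUntil u hu).takeUntil w hw1 with hp0
    set r := (p.takeUntil u hu).dropUntil w hw1 with hr
    have hspec1 : p0.append r = p.takeUntil u hu := Walk.take_spec _ hw1
    have hlen1 : p0.length + r.length = (p.takeUntil u hu).length := by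
      rw [← Walk.length_append, hspec1]
    have hq := hmin (p0.append (Walk.cons h.symm (p.dropUntil u hu)))
    rw [Walk.length_append, Walk.length_cons] at hq
    have hrlen : r.length ≤ 1 := by omega
    rcases Nat.lt_or_ge r.length 1 with h0 | h1
    · have : w = u := Walk.eq_of_length_eq_zero (p := r) (by omega)
      exact h.ne' this
    · have hr1 : r.length = 1 := by omega
      have := aux_edges_of_length_one r hr1
      have hmem : s(w, u) ∈ r.edges := by rw [this]; simp
      have : s(w, u) ∈ p.edges :=
        (Walk.edges_takeUntil_subset p hu) ((Walk.edges_dropUntil_subset _ hw1) hmem)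
      rw [Sym2.eq_swap] at this
      exact hne this
  · -- w occurs in the second part, after u
    set r := (p.dropUntil u hu).takeUntil w hw2 with hr
    set p3 := (p.dropUntil u hu).dropUntil w hw2 with hp3
    have hspec2 : r.append p3 = p.dropUntil u hu := Walk.take_spec _ hw2
    have hlen2 : r.length + p3.length = (p.dropUntil u hu).length := by
      rw [← Walk.length_append, hspec2]
    have hq := hmin ((p.takeUntil u hu).append (Walk.cons h p3))
    rw [Walk.length_append, Walk.length_cons] at hq
    have hrlen : r.length ≤ 1 := by omega
    rcases Nat.lt_or_ge r.length 1 with h0 | h1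
    · have : u = w := Walk.eq_of_length_eq_zero (p := r) (by omega)
      exact h.ne this
    · have hr1 : r.length = 1 := by omega
      have := aux_edges_of_length_one r hr1
      have hmem : s(u, w) ∈ r.edges := by rw [this]; simp
      exact hne ((Walk.edges_dropUntil_subset p hu)
        ((Walk.edges_takeUntil_subset _ hw2) hmem))

lemma aux_support_mapLe {H : SimpleGraph V} (h : G ≤ H) {u v : V} (p : G.Walk u v) :
    (p.mapLe h).support = p.support := by
  rw [Walk.mapLe, Walk.support_map]
  have : ⇑(Hom.ofLE h) = id := rfl
  rw [this, List.map_id]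

lemma aux_edges_mapLe {H : SimpleGraph V} (h : G ≤ H) {u v : V} (p : G.Walk u v) :
    (p.mapLe h).edges = p.edges := by
  rw [Walk.mapLe, Walk.edges_map]
  have : ⇑(Hom.ofLE h) = id := rfl
  rw [this, Sym2.map_id, List.map_id]

/-- One half of the cycle in the separator-clique argument: a shortest path from `s` to `t`
through the component of `a`. -/
lemma aux_side [DecidableEq V] {a b : V} (S : Finset V)
    (hsep : a ∉ S ∧ b ∉ S ∧ ¬(auxDelete G ↑S).Reachable a b)
    (hmin : ∀ T : Finset V, a ∉ T → b ∉ T → ¬(auxDelete G ↑T).Reachable a b →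
      S.card ≤ T.card)
    {s t : V} (hs : s ∈ S) (ht : t ∈ S) (hstne : s ≠ t) (hst : ¬ G.Adj s t) :
    ∃ p : G.Walk s t, p.IsPath ∧ 2 ≤ p.length ∧
      (∀ z ∈ p.support, (auxDelete G ↑S).Reachable a z ∨ z = s ∨ z = t) ∧
      (∀ u w, u ∈ p.support → w ∈ p.support → G.Adj u w → s(u, w) ∈ p.edges) := by
  classical
  set Sd : Set V := ↑S with hSd
  set A : V → Prop := fun x => (auxDelete G Sd).Reachable a x with hA
  set U : Set V := {x | A x ∨ x = s ∨ x = t} with hU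
  set HA : SimpleGraph V := auxDelete G Uᶜ with hHA
  have hUmem : ∀ z : V, z ∉ Uᶜ ↔ (A z ∨ z = s ∨ z = t) := by
    intro z; rw [Set.notMem_compl_iff]; rfl
  have hHAadj : ∀ {x y : V}, G.Adj x y → (A x ∨ x = s ∨ x = t) → (A y ∨ y = s ∨ y = t) →
      HA.Adj x y := fun hadj hx hy => ⟨hadj, (hUmem _).mpr hx, (hUmem _).mpr hy⟩
  have hHAle : HA ≤ G := auxDelete_le _
  -- neighbors of s and t in the component of a
  obtain ⟨xa, hxaA, hxas⟩ := aux_exists_adj_comp S hsep hmin hs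
  obtain ⟨ya, hyaA, hyat⟩ := aux_exists_adj_comp S hsep hmin ht
  -- walks inside the component transfer to HA
  have hwalkA : ∀ {x y : V} (w : (auxDelete G Sd).Walk x y), A x → HA.Reachable x y := by
    intro x y w
    induction w with
    | nil => exact fun _ => Reachable.refl _
    | @cons x z y h p ih =>
      intro hx
      have hz : A z := hx.trans h.reachable
      exact (SimpleGraph.Adj.reachable
        (hHAadj h.1 (Or.inl hx) (Or.inl hz))).trans (ih hz)
  have hreach : HA.Reachable s t := by
    obtain ⟨w⟩ := hxaA.symm.trans hyaA
    exact (SimpleGraph.Adj.reachable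
        (hHAadj hxas.symm (Or.inr (Or.inl rfl)) (Or.inl hxaA))).trans
      ((hwalkA w hxaA).trans
        (SimpleGraph.Adj.reachable (hHAadj hyat (Or.inl hyaA) (Or.inr (Or.inr rfl)))))
  obtain ⟨P0, hP0⟩ := hreach.exists_walk_length_eq_dist
  set PA : HA.Walk s t := P0.bypass with hPAdef
  have hPApath : PA.IsPath := P0.bypass_isPath
  have hPAmin : ∀ q : HA.Walk s t, PA.length ≤ q.length := by
    intro q
    calc PA.length ≤ P0.length := P0.length_bypass_le
    _ = HA.dist s t := hP0
    _ ≤ q.length := SimpleGraph.dist_le q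
  have hPAsupp : ∀ z ∈ PA.support, A z ∨ z = s ∨ z = t := by
    intro z hz
    rcases aux_delete_walk_support PA z hz with rfl | h
    · exact Or.inr (Or.inr rfl)
    · exact (hUmem z).mp h
  have hPA2 : 2 ≤ PA.length := by
    rcases Nat.lt_or_ge PA.length 2 with h2 | h2
    · interval_cases h : PA.length
      · exact absurd (Walk.eq_of_length_eq_zero (p := PA) h) hstne
      · have := aux_edges_of_length_one PA h
        have hmem : s(s, t) ∈ PA.edges := by rw [this]; simp
        exact absurd (Walk.adj_of_mem_edges PA hmem).1 hst
    · exact h2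
  -- transfer to G
  refine ⟨PA.mapLe hHAle, ?_, ?_, ?_, ?_⟩
  · exact hPApath.mapLe hHAle
  · rwa [Walk.mapLe, Walk.length_map]
  · intro z hz
    rw [aux_support_mapLe] at hz
    exact hPAsupp z hz
  · intro u w hu hw hadj
    rw [aux_support_mapLe] at hu hw
    have : HA.Adj u w := hHAadj hadj (hPAsupp u hu) (hPAsupp w hw)
    have := aux_mem_edges_of_adj PA hPAmin hu hw this
    rwa [aux_edges_mapLe]
/-- A minimum vertex separator in a chordal graph is a clique. -/
lemma aux_sep_clique [DecidableEq V] (hch : G.IsChordal) {a b : V} (hab : ¬ G.Adj a b)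
    (S : Finset V)
    (hsep : a ∉ S ∧ b ∉ S ∧ ¬(auxDelete G ↑S).Reachable a b)
    (hmin : ∀ T : Finset V, a ∉ T → b ∉ T → ¬(auxDelete G ↑T).Reachable a b →
      S.card ≤ T.card) :
    ∀ s ∈ S, ∀ t ∈ S, s ≠ t → G.Adj s t := by
  intro s hs t ht hstne
  by_contra hst
  have hsepB : b ∉ S ∧ a ∉ S ∧ ¬(auxDelete G ↑S).Reachable b a :=
    ⟨hsep.2.1, hsep.1, fun h => hsep.2.2 h.symm⟩
  have hminB : ∀ T : Finset V, b ∉ T → a ∉ T → ¬(auxDelete G ↑T).Reachable b a →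
      S.card ≤ T.card := fun T h1 h2 h3 => hmin T h2 h1 (fun h => h3 h.symm)
  obtain ⟨pA, hApath, hA2, hAsupp, hAchord⟩ := aux_side S hsep hmin hs ht hstne hst
  obtain ⟨pB, hBpath, hB2, hBsupp, hBchord⟩ := aux_side S hsepB hminB hs ht hstne hst
  have hABdisj : ∀ z, (auxDelete G (↑S : Set V)).Reachable a z →
      (auxDelete G (↑S : Set V)).Reachable b z → False :=
    fun z h1 h2 => hsep.2.2 (h1.trans h2.symm)
  have hAnS : ∀ z, (auxDelete G (↑S : Set V)).Reachable a z → z ∉ S := by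
    intro z h hz
    exact (aux_not_mem_of_reach (by simpa using hsep.1) h) (by simpa using hz)
  have hBnS : ∀ z, (auxDelete G (↑S : Set V)).Reachable b z → z ∉ S := by
    intro z h hz
    exact (aux_not_mem_of_reach (by simpa using hsep.2.1) h) (by simpa using hz)
  -- the combination fact
  have hkey : ∀ z, ((auxDelete G (↑S : Set V)).Reachable a z ∨ z = s ∨ z = t) →
      ((auxDelete G (↑S : Set V)).Reachable b z ∨ z = s ∨ z = t) → (z = s ∨ z = t) := by
    intro z h1 h2
    rcases h1 with h1 | h1 | h1
    · rcases h2 with h2 | h2 | h2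
      · exact absurd (hABdisj z h1 h2) id
      · exact Or.inl h2
      · exact Or.inr h2
    · exact Or.inl h1
    · exact Or.inr h1
  set c : G.Walk s s := pA.append pB.reverse with hc_def
  have hcyc : c.IsCycle := by
    rw [Walk.isCycle_def]
    refine ⟨?_, ?_, ?_⟩
    · rw [Walk.isTrail_def, hc_def, Walk.edges_append, Walk.edges_reverse]
      refine List.Nodup.append ?_ ?_ ?_
      · exact hApath.isTrail.edges_nodup
      · exact List.nodup_reverse.mpr hBpath.isTrail.edges_nodup
      · intro e he1 he2
        rw [List.mem_reverse] at he2
        induction e using Sym2.ind with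
        | _ x y =>
          have hx1 : x ∈ pA.support := pA.fst_mem_support_of_mem_edges he1
          have hy1 : y ∈ pA.support := pA.snd_mem_support_of_mem_edges he1
          have hx2 : x ∈ pB.support := pB.fst_mem_support_of_mem_edges he2
          have hy2 : y ∈ pB.support := pB.snd_mem_support_of_mem_edges he2
          have hadjxy : G.Adj x y := pA.adj_of_mem_edges he1
          have hxst := hkey x (hAsupp x hx1) (hBsupp x hx2)
          have hyst := hkey y (hAsupp y hy1) (hBsupp y hy2)
          rcases hxst with rfl | rfl <;> rcases hyst with rfl | rfl
          · exact hadjxy.ne rfl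
          · exact hst hadjxy
          · exact hst hadjxy.symm
          · exact hadjxy.ne rfl
    · intro hnil
      have h0 : c.length = 0 := by rw [hnil]; rfl
      rw [hc_def, Walk.length_append] at h0
      omega
    · rw [hc_def, Walk.tail_support_append]
      have hAnodup : pA.support.Nodup := (Walk.isPath_def _).mp hApath
      have hBrnodup : pB.reverse.support.Nodup := (Walk.isPath_def _).mp hBpath.reverse
      have hsnott : s ∉ pA.support.tail := by
        have hcons := pA.support_eq_cons
        rw [hcons] at hAnodup
        exact (List.nodup_cons.mp hAnodup).1
      have htnotB : t ∉ pB.reverse.support.tail := by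
        have hcons := pB.reverse.support_eq_cons
        rw [hcons] at hBrnodup
        exact (List.nodup_cons.mp hBrnodup).1
      refine List.Nodup.append hAnodup.tail hBrnodup.tail ?_
      intro z hz1 hz2
      have hz1' : z ∈ pA.support := List.mem_of_mem_tail hz1
      have hz2' : z ∈ pB.support := by
        have := List.mem_of_mem_tail hz2
        rwa [Walk.support_reverse, List.mem_reverse] at this
      have hzs : z ≠ s := fun h => hsnott (h ▸ hz1)
      have hzt : z ≠ t := fun h => htnotB (h ▸ hz2)
      rcases hAsupp z hz1' with h1 | h1 | h1
      · rcases hBsupp z hz2' with h2 | h2 | h2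
        · exact hABdisj z h1 h2
        · exact hzs h2
        · exact hzt h2
      · exact hzs h1
      · exact hzt h1
  have hlen : 4 ≤ c.length := by
    rw [hc_def, Walk.length_append, Walk.length_reverse]; omega
  obtain ⟨u, w, hu, hw, hadj, hne⟩ := hch s c hcyc hlen
  have hu' : u ∈ pA.support ∨ u ∈ pB.support := by
    rw [hc_def, Walk.mem_support_append_iff] at hu
    rcases hu with h | h
    · exact Or.inl h
    · right; rwa [Walk.support_reverse, List.mem_reverse] at h
  have hw' : w ∈ pA.support ∨ w ∈ pB.support := by
    rw [hc_def, Walk.mem_support_append_iff] at hw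
    rcases hw with h | h
    · exact Or.inl h
    · right; rwa [Walk.support_reverse, List.mem_reverse] at h
  have hneA : ∀ x y : V, s(x, y) ∉ pA.edges ∨ s(x,y) ∈ c.edges → True := fun _ _ _ => trivial
  have hnotA : s(u, w) ∉ pA.edges := by
    intro hmem
    apply hne
    rw [hc_def, Walk.edges_append]
    exact List.mem_append_left _ hmem
  have hnotB : s(u, w) ∉ pB.edges := by
    intro hmem
    apply hne
    rw [hc_def, Walk.edges_append, Walk.edges_reverse]
    exact List.mem_append_right _ (List.mem_reverse.mpr hmem)
  have hmix : ∀ x y : V, x ∈ pA.support → y ∈ pB.support → G.Adj x y →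
      s(x, y) ∉ pA.edges → s(x, y) ∉ pB.edges → False := by
    intro x y hx hy hadj' hn1 hn2
    rcases hAsupp x hx with h1 | rfl | rfl
    · rcases hBsupp y hy with h2 | rfl | rfl
      · -- x in component of a, y in component of b, adjacent: contradiction
        have hyA : (auxDelete G (↑S : Set V)).Reachable a y :=
          h1.trans (SimpleGraph.Adj.reachable
            ⟨hadj', by simpa using hAnS x h1, by simpa using hBnS y h2⟩)
        exact hABdisj y hyA h2
      · -- y = s : then y is in pA.support as well
        exact hn1 (hAchord x y hx pA.start_mem_support hadj')
      · exact hn1 (hAchord x y hx pA.end_mem_support hadj')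
    · exact hn2 (hBchord x y pB.start_mem_support hy hadj')
    · exact hn2 (hBchord x y pB.end_mem_support hy hadj')
  rcases hu' with huA | huB
  · rcases hw' with hwA | hwB
    · exact hnotA (hAchord u w huA hwA hadj)
    · exact hmix u w huA hwB hadj hnotA hnotB
  · rcases hw' with hwA | hwB
    · refine hmix w u hwA huB hadj.symm ?_ ?_
      · rwa [Sym2.eq_swap]
      · rwa [Sym2.eq_swap]
    · exact hnotB (hBchord u w huB hwB hadj)
/-- Induced subgraphs of chordal graphs are chordal. -/
lemma aux_isChordal_induce (h : G.IsChordal) (s : Set V) :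
    (G.induce s).IsChordal := by
  intro v c hc hlen
  let f := (SimpleGraph.Embedding.induce s (G := G)).toHom
  have hinj : Function.Injective f := Subtype.val_injective
  have hc' : (c.map f).IsCycle := hc.map hinj
  have hlen' : 4 ≤ (c.map f).length := by rwa [Walk.length_map]
  obtain ⟨u, w, hu, hw, hadj, hne⟩ := h _ (c.map f) hc' hlen'
  rw [Walk.support_map, List.mem_map] at hu hw
  obtain ⟨u', hu', rfl⟩ := hu
  obtain ⟨w', hw', rfl⟩ := hw
  refine ⟨u', w', hu', hw', ?_, ?_⟩
  · exact hadj
  · intro hmem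
    apply hne
    rw [Walk.edges_map]
    exact List.mem_map_of_mem hmem

/-- From a minimal separator setup, find a simplicial vertex inside the component of `a`. -/
lemma aux_simplicial_side {V : Type u} [Fintype V] [DecidableEq V] {G : SimpleGraph V} {n : ℕ}
    (IH : ∀ {W : Type u} [Fintype W] [DecidableEq W] (H : SimpleGraph W),
      H.IsChordal → Fintype.card W ≤ n →
      (∀ v : W, H.IsClique {x | H.Adj v x}) ∨
        ∃ v w : W, v ≠ w ∧ ¬ H.Adj v w ∧ H.IsClique {x | H.Adj v x} ∧
          H.IsClique {x | H.Adj w x})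
    (hch : G.IsChordal) (hcard : Fintype.card V ≤ n + 1)
    {a b : V} (S : Finset V)
    (hsep : a ∉ S ∧ b ∉ S ∧ ¬(auxDelete G ↑S).Reachable a b)
    (hScl : ∀ s ∈ S, ∀ t ∈ S, s ≠ t → G.Adj s t) :
    ∃ v : V, (auxDelete G (↑S : Set V)).Reachable a v ∧ G.IsClique {x | G.Adj v x} := by
  classical
  set A : Set V := {x | (auxDelete G (↑S : Set V)).Reachable a x} with hA
  set WA : Set V := A ∪ ↑S with hWA
  haveI : DecidablePred (· ∈ WA) := Classical.decPred _
  have hbA : b ∉ WA := by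
    intro hb
    rcases hb with hb | hb
    · exact hsep.2.2 hb
    · exact hsep.2.1 (by simpa using hb)
  have hcards : Fintype.card ↥WA ≤ n := by
    have hlt : Fintype.card ↥WA < Fintype.card V := by
      apply Fintype.card_lt_of_injective_of_notMem (Subtype.val) Subtype.val_injective (b := b)
      intro hmem
      obtain ⟨x, hx⟩ := hmem
      exact hbA (hx ▸ x.2)
    omega
  have hchA : (G.induce WA).IsChordal := aux_isChordal_induce hch WA
  have hclosure : ∀ {v y : V}, v ∈ A → G.Adj v y → y ∈ WA := by
    intro v y hv hadj
    by_cases hy : y ∈ (↑S : Set V)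
    · exact Or.inr hy
    · left
      exact Reachable.trans hv (SimpleGraph.Adj.reachable
        ⟨hadj, aux_not_mem_of_reach (show a ∉ (↑S : Set V) by simpa using hsep.1) hv, hy⟩)
  have hlift : ∀ (v : ↥WA), (v : V) ∈ A →
      (G.induce WA).IsClique {x | (G.induce WA).Adj v x} →
      G.IsClique {x | G.Adj (v : V) x} := by
    intro v hv hsimp
    rw [SimpleGraph.isClique_iff]
    intro x hx y hy hxy
    have hxW : x ∈ WA := hclosure hv hx
    have hyW : y ∈ WA := hclosure hv hy
    rw [SimpleGraph.isClique_iff] at hsimp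
    have hm1 : (⟨x, hxW⟩ : ↥WA) ∈ {z : ↥WA | (G.induce WA).Adj v z} := by
      show (G.induce WA).Adj v ⟨x, hxW⟩
      simpa using hx
    have hm2 : (⟨y, hyW⟩ : ↥WA) ∈ {z : ↥WA | (G.induce WA).Adj v z} := by
      show (G.induce WA).Adj v ⟨y, hyW⟩
      simpa using hy
    have hadj := hsimp hm1 hm2 (fun h => hxy (congrArg Subtype.val h))
    simpa using hadj
  rcases IH (G.induce WA) hchA hcards with hall | ⟨v, w, hvw, hnadj, hv, hw⟩
  · have haA : a ∈ A := Reachable.refl _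
    exact ⟨a, haA, hlift ⟨a, Or.inl haA⟩ haA (hall _)⟩
  · have hnot : ¬((v : V) ∈ (↑S : Set V) ∧ (w : V) ∈ (↑S : Set V)) := by
      rintro ⟨h1, h2⟩
      apply hnadj
      show G.Adj (v : V) (w : V)
      exact hScl _ (by simpa using h1) _ (by simpa using h2)
        (fun h => hvw (Subtype.ext h))
    rcases not_and_or.mp hnot with h1 | h1
    · have hvA : (v : V) ∈ A := by
        rcases v.2 with h | h
        · exact h
        · exact absurd h h1
      exact ⟨v, hvA, hlift v hvA hv⟩
    · have hwA : (w : V) ∈ A := by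
        rcases w.2 with h | h
        · exact h
        · exact absurd h h1
      exact ⟨w, hwA, hlift w hwA hw⟩

/-- Dirac's theorem: a finite chordal graph is complete or has two nonadjacent
simplicial vertices. -/
lemma aux_dirac (n : ℕ) : ∀ {V : Type u} [Fintype V] [DecidableEq V] (G : SimpleGraph V),
    G.IsChordal → Fintype.card V ≤ n →
    (∀ v : V, G.IsClique {x | G.Adj v x}) ∨
      ∃ v w : V, v ≠ w ∧ ¬ G.Adj v w ∧ G.IsClique {x | G.Adj v x} ∧
        G.IsClique {x | G.Adj w x} := by
  induction n with
  | zero =>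
    intro V _ _ G hch hcard
    left
    intro v
    have : IsEmpty V := Fintype.card_eq_zero_iff.mp (Nat.le_zero.mp hcard)
    exact (this.false v).elim
  | succ n ih =>
    intro V _ _ G hch hcard
    classical
    by_cases hcomp : ∀ v w : V, v ≠ w → G.Adj v w
    · left
      intro v
      rw [SimpleGraph.isClique_iff]
      intro x _ y _ hxy
      exact hcomp x y hxy
    · push_neg at hcomp
      obtain ⟨a, b, hab, hnadj⟩ := hcomp
      have hex : ∃ T : Finset V, a ∉ T ∧ b ∉ T ∧ ¬(auxDelete G ↑T).Reachable a b := by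
        refine ⟨Finset.univ \ {a, b}, by simp, by simp, ?_⟩
        rintro ⟨w⟩
        cases w with
        | nil => exact hab rfl
        | @cons _ z _ h p =>
          have hz : z = a ∨ z = b := by
            have h2 := h.2.2
            simp only [Finset.coe_sdiff, Finset.coe_univ, Set.mem_diff, Set.mem_univ,
              true_and, not_not] at h2
            simpa using h2
          rcases hz with rfl | rfl
          · exact G.loopless.irrefl z h.1
          · exact hnadj h.1
      obtain ⟨T0, hT0⟩ := hex
      obtain ⟨S, hSmem, hminS⟩ := Finset.exists_min_image
        ((Finset.univ : Finset (Finset V)).filter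
          (fun T : Finset V => a ∉ T ∧ b ∉ T ∧ ¬(auxDelete G ↑T).Reachable a b))
        Finset.card
        ⟨T0, Finset.mem_filter.mpr ⟨Finset.mem_univ _, hT0⟩⟩
      rw [Finset.mem_filter] at hSmem
      have hsep := hSmem.2
      have hmin : ∀ T : Finset V, a ∉ T → b ∉ T → ¬(auxDelete G ↑T).Reachable a b →
          S.card ≤ T.card := fun T h1 h2 h3 =>
        hminS T (Finset.mem_filter.mpr ⟨Finset.mem_univ _, h1, h2, h3⟩)
      have hScl := aux_sep_clique hch hnadj S hsep hmin
      have hsepB : b ∉ S ∧ a ∉ S ∧ ¬(auxDelete G ↑S).Reachable b a :=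
        ⟨hsep.2.1, hsep.1, fun h => hsep.2.2 h.symm⟩
      obtain ⟨vA, hvA, hvAcl⟩ := aux_simplicial_side (fun {W} _ _ H h1 h2 => ih H h1 h2)
        hch hcard S hsep hScl
      obtain ⟨vB, hvB, hvBcl⟩ := aux_simplicial_side (fun {W} _ _ H h1 h2 => ih H h1 h2)
        hch hcard S hsepB hScl
      right
      have hAnS : vA ∉ (↑S : Set V) :=
        aux_not_mem_of_reach (by simpa using hsep.1) hvA
      have hBnS : vB ∉ (↑S : Set V) :=
        aux_not_mem_of_reach (by simpa using hsep.2.1) hvB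
      have hABdisj : ∀ z, (auxDelete G (↑S : Set V)).Reachable a z →
          (auxDelete G (↑S : Set V)).Reachable b z → False :=
        fun z h1 h2 => hsep.2.2 (h1.trans h2.symm)
      refine ⟨vA, vB, ?_, ?_, hvAcl, hvBcl⟩
      · intro h
        exact hABdisj vA hvA (h ▸ hvB)
      · intro h
        exact hABdisj vB (hvA.trans (SimpleGraph.Adj.reachable ⟨h, hAnS, hBnS⟩)) hvB
/-- Chordal graphs admit a perfect elimination ordering. -/
lemma aux_peo (n : ℕ) : ∀ {V : Type u} [Fintype V] [DecidableEq V] (G : SimpleGraph V),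
    Fintype.card V = n → G.IsChordal →
    ∃ f : V ≃ Fin (Fintype.card V),
      ∀ v : V, G.IsClique {w : V | G.Adj v w ∧ f w < f v} := by
  induction n with
  | zero =>
    intro V _ _ G hcard hch
    haveI : IsEmpty V := Fintype.card_eq_zero_iff.mp hcard
    haveI : IsEmpty (Fin (Fintype.card V)) := by rw [hcard]; infer_instance
    exact ⟨Equiv.equivOfIsEmpty _ _, fun v => (IsEmpty.false v).elim⟩
  | succ n ih =>
    intro V _ _ G hcard hch
    classical
    haveI : Nonempty V := Fintype.card_pos_iff.mp (by omega)
    obtain ⟨v, hv⟩ : ∃ v : V, G.IsClique {x | G.Adj v x} := by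
      rcases aux_dirac (Fintype.card V) G hch le_rfl with h | ⟨v, w, _, _, hv, _⟩
      · exact ⟨Classical.arbitrary V, h _⟩
      · exact ⟨v, hv⟩
    set s : Set V := {x | x ≠ v} with hs
    have hcards : Fintype.card ↥s = n := by
      have h1 : Fintype.card {x : V // x = v} = 1 := Fintype.card_subtype_eq v
      have h2 : Fintype.card {x : V // ¬ x = v} = Fintype.card V - Fintype.card {x : V // x = v} :=
        Fintype.card_subtype_compl _
      have hcongr : Fintype.card ↥s = Fintype.card {x : V // ¬ x = v} :=
        Fintype.card_congr (Equiv.refl _)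
      omega
    obtain ⟨f', hf'⟩ := ih (G.induce s) hcards (aux_isChordal_induce hch s)
    let f'' : ↥s ≃ Fin n := f'.trans (finCongr hcards)
    have hf''lt : ∀ x y : ↥s, f'' x < f'' y ↔ f' x < f' y := by
      intro x y
      rw [Fin.lt_def, Fin.lt_def]
      simp [f'']
    let e1 : V ≃ Option ↥s :=
      { toFun := fun x => if h : x = v then none else some ⟨x, h⟩
        invFun := fun o => o.elim v Subtype.val
        left_inv := by intro x; by_cases h : x = v <;> simp [h]
        right_inv := by
          rintro (_ | ⟨x, hx⟩)
          · simp
          · have hx' : x ≠ v := hx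
            simp [hx'] }
    let f : V ≃ Fin (Fintype.card V) :=
      e1.trans ((f''.optionCongr).trans ((finSuccEquivLast).symm.trans (finCongr hcard.symm)))
    have hfval : ∀ (x : V) (h : x ≠ v), (f x : ℕ) = (f'' ⟨x, h⟩ : ℕ) := by
      intro x h
      simp [f, e1, h, finCongr]
    have hfv : (f v : ℕ) = n := by
      simp [f, e1, finCongr]
    refine ⟨f, ?_⟩
    intro x
    by_cases hx : x = v
    · subst hx
      exact hv.subset (fun w hw => hw.1)
    · rw [SimpleGraph.isClique_iff]
      intro p hp q hq hpq
      have hfxlt : (f x : ℕ) < n := by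
        have := hfval x hx
        have hlt : (f'' ⟨x, hx⟩ : ℕ) < n := (f'' ⟨x, hx⟩).is_lt
        omega
      have hpv : p ≠ v := by
        intro h
        subst h
        have := hp.2
        rw [Fin.lt_def] at this
        omega
      have hqv : q ≠ v := by
        intro h
        subst h
        have := hq.2
        rw [Fin.lt_def] at this
        omega
      have hplt : f' ⟨p, hpv⟩ < f' ⟨x, hx⟩ := by
        rw [← hf''lt, Fin.lt_def]
        have h1 := hfval p hpv
        have h2 := hfval x hx
        have := hp.2
        rw [Fin.lt_def] at this
        omega
      have hqlt : f' ⟨q, hqv⟩ < f' ⟨x, hx⟩ := by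
        rw [← hf''lt, Fin.lt_def]
        have h1 := hfval q hqv
        have h2 := hfval x hx
        have := hq.2
        rw [Fin.lt_def] at this
        omega
      have hcl := hf' ⟨x, hx⟩
      rw [SimpleGraph.isClique_iff] at hcl
      have hm1 : (⟨p, hpv⟩ : ↥s) ∈ {w : ↥s | (G.induce s).Adj ⟨x, hx⟩ w ∧ f' w < f' ⟨x, hx⟩} := by
        refine ⟨?_, hplt⟩
        simpa using hp.1
      have hm2 : (⟨q, hqv⟩ : ↥s) ∈ {w : ↥s | (G.induce s).Adj ⟨x, hx⟩ w ∧ f' w < f' ⟨x, hx⟩} := by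
        refine ⟨?_, hqlt⟩
        simpa using hq.1
      have := hcl hm1 hm2 (fun h => hpq (congrArg Subtype.val h))
      simpa using this

/-- If a path from `u` to `v` contains the edge `s(u,v)`, it has length one. -/
lemma aux_length_eq_one_of_edge_mem {u v : V} (p : G.Walk u v) (hp : p.IsPath)
    (he : s(u, v) ∈ p.edges) : p.length = 1 := by
  cases p with
  | nil => simp at he
  | cons h q =>
    rename_i x
    rw [Walk.edges_cons, List.mem_cons] at he
    rcases he with he | he
    · rw [Sym2.eq_iff] at he
      rcases he with ⟨-, hv⟩ | ⟨hu, -⟩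
      · subst hv
        have hq : q.IsPath := hp.of_cons
        rw [Walk.isPath_iff_eq_nil] at hq
        subst hq; simp
      · exact absurd hu h.ne
    · have : u ∈ q.support := Walk.fst_mem_support_of_mem_edges q he
      rw [Walk.cons_isPath_iff] at hp
      exact absurd this hp.2

lemma aux_length_rotate [DecidableEq V] {u v : V} (c : G.Walk v v) (h : u ∈ c.support) :
    (c.rotate u h).length = c.length := by
  rw [Walk.rotate, Walk.length_append, Nat.add_comm, ← Walk.length_append, c.take_spec h]

/-- The easy direction: a perfect elimination ordering implies chordality. -/
lemma aux_chordal_of_peo [DecidableEq V] {α : Type*} [LinearOrder α]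
    (f : V → α) (hinj : Function.Injective f)
    (hcl : ∀ v : V, G.IsClique {w : V | G.Adj v w ∧ f w < f v}) :
    G.IsChordal := by
  intro v0 c hc hlen
  -- choose a vertex of the cycle with maximal f-value
  obtain ⟨v, hvmem, hvmax⟩ := Finset.exists_max_image c.support.toFinset f
    ⟨v0, by simp [Walk.start_mem_support]⟩
  rw [List.mem_toFinset] at hvmem
  have hvmax' : ∀ x ∈ c.support, f x ≤ f v := fun x hx => hvmax x (List.mem_toFinset.mpr hx)
  set d := c.rotate v hvmem with hd_def
  have hd : d.IsCycle := hc.rotate hvmem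
  have hdlen : d.length = c.length := aux_length_rotate c hvmem
  have hmemd : ∀ x, x ∈ d.support → x ∈ c.support := by
    intro x hx
    rw [Walk.mem_support_iff] at hx
    rcases hx with rfl | hx
    · exact hvmem
    · have := (Walk.support_rotate c v hvmem).mem_iff.mp hx
      exact List.mem_of_mem_tail this
  have hedged : ∀ e, e ∈ d.edges ↔ e ∈ c.edges := fun e => (Walk.rotate_edges c v hvmem).mem_iff
  -- decompose d = cons (v,x) (r.concat (y,v))
  obtain ⟨x, hvx, q, hq⟩ := Walk.not_nil_iff.mp hd.not_nil
  have hqnil : ¬ q.Nil := by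
    rw [Walk.nil_iff_length_eq]
    have : d.length = q.length + 1 := by rw [hq]; simp
    omega
  obtain ⟨y, r, hyv, hr⟩ := aux_exists_concat q hqnil
  have hdlen' : d.length = r.length + 2 := by
    rw [hq, hr]; simp [Walk.length_concat]
  -- the tail part is a path
  have hqpath : q.IsPath ∧ s(v, x) ∉ q.edges := by
    have := hd
    rw [hq, Walk.cons_isCycle_iff] at this
    exact this
  -- x and y are in the support and distinct from v
  have hxmem : x ∈ d.support := by rw [hq]; simp [Walk.support_cons, Walk.start_mem_support]
  have hymem : y ∈ d.support := by
    rw [hq, hr]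
    simp only [Walk.support_cons, List.mem_cons]
    right
    rw [Walk.support_concat]
    exact List.mem_append_left _ r.end_mem_support
  have hxv : x ≠ v := fun h => G.ne_of_adj hvx h.symm
  have hyv' : y ≠ v := G.ne_of_adj hyv
  have hxlt : f x < f v :=
    lt_of_le_of_ne (hvmax' x (hmemd x hxmem)) (fun h => hxv (hinj h))
  have hylt : f y < f v :=
    lt_of_le_of_ne (hvmax' y (hmemd y hymem)) (fun h => hyv' (hinj h))
  have hxy : x ≠ y := by
    intro h
    subst h
    have : r.IsPath := by
      have := hqpath.1
      rw [hr, Walk.concat_eq_append] at this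
      exact this.of_append_left
    rw [Walk.isPath_iff_eq_nil] at this
    rw [this] at hdlen'
    simp at hdlen'
    omega
  -- the chord
  have hadj : G.Adj x y := by
    have := hcl v
    rw [SimpleGraph.isClique_iff] at this
    exact this ⟨hvx, hxlt⟩ ⟨hyv.symm, hylt⟩ hxy
  refine ⟨x, y, hmemd x hxmem, hmemd y hymem, hadj, ?_⟩
  intro hmem
  rw [← hedged, hq, Walk.edges_cons, hr, Walk.edges_concat, List.concat_eq_append, List.mem_cons, List.mem_append, List.mem_singleton] at hmem
  rcases hmem with h1 | h2 | h3
  · rw [Sym2.eq_iff] at h1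
    rcases h1 with ⟨h, -⟩ | ⟨-, h⟩
    · exact hxv h
    · exact hyv' h
  · have : r.IsPath := by
      have := hqpath.1
      rw [hr, Walk.concat_eq_append] at this
      exact this.of_append_left
    have := aux_length_eq_one_of_edge_mem r this h2
    omega
  · rw [Sym2.eq_iff] at h3
    rcases h3 with ⟨h, -⟩ | ⟨h, -⟩
    · exact hxy h
    · exact hxv h


/-- A finite simple graph is chordal iff it can be built by starting from a single
vertex and repeatedly adding a new vertex joined to all vertices of a (possibly empty)
clique of the current graph; equivalently, iff there is an enumeration of the vertices
such that the earlier neighbors of each vertex form a clique. -/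
theorem isChordal_iff_inductive_clique_construction
    {V : Type*} [Fintype V] [DecidableEq V] (G : SimpleGraph V) :
    G.IsChordal ↔
      ∃ f : V ≃ Fin (Fintype.card V),
        ∀ v : V, G.IsClique {w : V | G.Adj v w ∧ f w < f v} := by
  constructor
  · intro h
    exact aux_peo (Fintype.card V) G rfl h
  · rintro ⟨f, hf⟩
    exact aux_chordal_of_peo f f.injective hf
end

section
/- Every finite chordal graph with at least one vertex has a simplicial vertex, i.e., a vertex whose neighborhood is a clique. -/
namespace ChordalAux

open SimpleGraph

variable {V : Type*}

/-- Restriction of `G` to a vertex set `s`, as a graph on the same vertex type. -/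
def Res (G : SimpleGraph V) (s : Set V) : SimpleGraph V where
  Adj u v := G.Adj u v ∧ u ∈ s ∧ v ∈ s
  symm := ⟨fun _ _ ⟨h, hu, hv⟩ => ⟨h.symm, hv, hu⟩⟩
  loopless := ⟨fun u ⟨h, _, _⟩ => G.loopless.irrefl u h⟩

lemma res_support_subset {G : SimpleGraph V} {s : Set V} :
    ∀ {u v : V} (p : (Res G s).Walk u v), u ∈ s → ∀ x ∈ p.support, x ∈ s
  | _, _, Walk.nil, hu, x, hx => by simp at hx; subst hx; exact hu
  | _, _, Walk.cons h p, hu, x, hx => by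
    rw [Walk.support_cons, List.mem_cons] at hx
    rcases hx with rfl | hx
    · exact hu
    · exact res_support_subset p h.2.2 x hx

lemma res_edges_mem {G : SimpleGraph V} {s s' : Set V} {u v : V} (p : (Res G s).Walk u v)
    (h : ∀ x ∈ p.support, x ∈ s') : ∀ e ∈ p.edges, e ∈ (Res G s').edgeSet := by
  intro e he
  induction e with
  | _ x y =>
    exact ⟨(p.adj_of_mem_edges he).1, h x (p.fst_mem_support_of_mem_edges he),
      h y (p.snd_mem_support_of_mem_edges he)⟩

lemma res_edges_mem_G {G : SimpleGraph V} {s : Set V} {u v : V} (p : (Res G s).Walk u v) :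
    ∀ e ∈ p.edges, e ∈ G.edgeSet := by
  intro e he
  induction e with
  | _ x y => exact (p.adj_of_mem_edges he).1

lemma exists_min_path {H : SimpleGraph V} {x y : V} (h : H.Reachable x y) :
    ∃ p : H.Walk x y, p.IsPath ∧ ∀ q : H.Walk x y, p.length ≤ q.length := by
  classical
  obtain ⟨p0⟩ := h
  have hex : ∃ n, ∃ p : H.Walk x y, p.length = n := ⟨p0.length, p0, rfl⟩
  obtain ⟨p, hp⟩ := Nat.find_spec hex
  refine ⟨p.bypass, p.bypass_isPath, fun q => ?_⟩
  calc p.bypass.length ≤ p.length := p.length_bypass_le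
    _ ≤ q.length := by rw [hp]; exact Nat.find_min' hex ⟨q, rfl⟩

lemma length_one_edges {H : SimpleGraph V} {u w : V} (q : H.Walk u w) (h : q.length = 1) :
    q.edges = [s(u, w)] := by
  cases q with
  | nil => simp at h
  | cons h' q' =>
    cases q' with
    | nil => simp
    | cons h'' q'' => simp [Walk.length_cons] at h

lemma chord_of_min {H : SimpleGraph V} {x y : V} (p : H.Walk x y)
    (hmin : ∀ q : H.Walk x y, p.length ≤ q.length) {u w : V} (h : H.Adj u w)
    (hu : u ∈ p.support) (hw : w ∈ p.support) : s(u, w) ∈ p.edges := by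
  classical
  have hsplit := p.take_spec hu
  have hlenp : (p.takeUntil u hu).length + (p.dropUntil u hu).length = p.length := by
    rw [← Walk.length_append, hsplit]
  have hw' : w ∈ (p.takeUntil u hu).support ∨ w ∈ (p.dropUntil u hu).support := by
    rw [← Walk.mem_support_append_iff, hsplit]; exact hw
  rcases hw' with hwk | hwd
  · set k := p.takeUntil u hu with hk
    have hksplit := k.take_spec hwk
    have hklen : (k.takeUntil w hwk).length + (k.dropUntil w hwk).length = k.length := by
      rw [← Walk.length_append, hksplit]
    rcases Nat.lt_or_ge (k.dropUntil w hwk).length 2 with hlt | hge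
    · interval_cases hL : (k.dropUntil w hwk).length
      · exact absurd (Walk.eq_of_length_eq_zero hL) h.ne'
      · have hE := length_one_edges (k.dropUntil w hwk) hL
        have hmem : s(w, u) ∈ k.edges := by
          apply k.edges_dropUntil_subset hwk
          rw [hE]; simp
        rw [Sym2.eq_swap]
        exact p.edges_takeUntil_subset hu hmem
    · exfalso
      have hq := hmin ((k.takeUntil w hwk).append (Walk.cons h.symm (p.dropUntil u hu)))
      rw [Walk.length_append, Walk.length_cons] at hq
      omega
  · set d := p.dropUntil u hu with hd
    have hdsplit := d.take_spec hwd
    have hdlen : (d.takeUntil w hwd).length + (d.dropUntil w hwd).length = d.length := by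
      rw [← Walk.length_append, hdsplit]
    rcases Nat.lt_or_ge (d.takeUntil w hwd).length 2 with hlt | hge
    · interval_cases hL : (d.takeUntil w hwd).length
      · exact absurd (Walk.eq_of_length_eq_zero hL) h.ne
      · have hE := length_one_edges (d.takeUntil w hwd) hL
        have hmem : s(u, w) ∈ d.edges := by
          apply d.edges_takeUntil_subset hwd
          rw [hE]; simp
        exact p.edges_dropUntil_subset hu hmem
    · exfalso
      have hq := hmin ((p.takeUntil u hu).append (Walk.cons h (d.dropUntil w hwd)))
      rw [Walk.length_append, Walk.length_cons] at hq
      omega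

/-- `v` is simplicial within the vertex set `s`. -/
def Simp (G : SimpleGraph V) (s : Set V) (v : V) : Prop :=
  ∀ ⦃x⦄, x ∈ s → ∀ ⦃y⦄, y ∈ s → G.Adj v x → G.Adj v y → x ≠ y → G.Adj x y

theorem aux [Fintype V] (G : SimpleGraph V) (hG : G.IsChordal) :
    ∀ (n : ℕ) (s : Set V), s.ncard ≤ n → s.Nonempty →
      (∀ x ∈ s, ∀ y ∈ s, x ≠ y → G.Adj x y) ∨
      ∃ v ∈ s, ∃ w ∈ s, v ≠ w ∧ ¬G.Adj v w ∧ Simp G s v ∧ Simp G s w := by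
  intro n
  induction n with
  | zero =>
    intro s hcard hne
    have := (Set.ncard_pos s.toFinite).mpr hne
    omega
  | succ n IH =>
    intro s hcard hne
    by_cases hcomp : ∀ x ∈ s, ∀ y ∈ s, x ≠ y → G.Adj x y
    · exact Or.inl hcomp
    right
    push_neg at hcomp
    obtain ⟨a, ha, b, hb, hab, hnadj⟩ := hcomp
    classical
    set Sep : Set V → Prop := fun T => T ⊆ s \ {a, b} ∧ ¬(Res G (s \ T)).Reachable a b
      with hSepdef
    have hsep0 : Sep (s \ {a, b}) := by
      refine ⟨subset_rfl, fun hr => ?_⟩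
      obtain ⟨p⟩ := hr
      cases p with
      | nil => exact hab rfl
      | @cons _ x _ h q =>
        have hx : x ∈ s \ (s \ {a, b}) := h.2.2
        have hx2 : x ∈ ({a, b} : Set V) := by
          rcases hx with ⟨hxs, hxn⟩
          by_contra hxx
          exact hxn ⟨hxs, hxx⟩
        rcases hx2 with rfl | rfl
        · exact G.loopless.irrefl _ h.1
        · exact hnadj h.1
    have hexT : ∃ k, ∃ T, Sep T ∧ T.ncard = k := ⟨_, _, hsep0, rfl⟩
    obtain ⟨T, hT, hTcard⟩ := Nat.find_spec hexT
    have hTmin : ∀ T', Sep T' → T.ncard ≤ T'.ncard := fun T' h' => by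
      rw [hTcard]; exact Nat.find_min' hexT ⟨T', h', rfl⟩
    set R := Res G (s \ T) with hRdef
    set Comp : V → Set V := fun c => {x | x ∈ s \ T ∧ R.Reachable c x} with hCompdef
    have hTs : T ⊆ s := fun x hx => (hT.1 hx).1
    have haT : a ∈ s \ T := ⟨ha, fun h => (hT.1 h).2 (by simp)⟩
    have hbT : b ∈ s \ T := ⟨hb, fun h => (hT.1 h).2 (by simp)⟩
    have haA : a ∈ Comp a := ⟨haT, Reachable.refl _⟩
    have hbB : b ∈ Comp b := ⟨hbT, Reachable.refl _⟩
    have hdisj : ∀ x, x ∈ Comp a → x ∈ Comp b → False := fun x hxA hxB =>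
      hT.2 (hxA.2.trans hxB.2.symm)
    -- every element of T has a neighbor in each of `Comp a`, `Comp b`
    have hnb : ∀ t ∈ T, ∀ c ∈ ({a, b} : Set V), ∃ x, x ∈ Comp c ∧ G.Adj t x := by
      intro t ht c hc
      by_contra hno
      push_neg at hno
      have hsub' : ∀ x, x ∈ s \ (T \ {t}) → x ≠ t → x ∈ s \ T := by
        intro x hx hxt
        exact ⟨hx.1, fun hxT => hx.2 ⟨hxT, hxt⟩⟩
      have hcs : c ∈ s \ T := by rcases hc with rfl | rfl; exacts [haT, hbT]
      have hcs' : c ∈ s \ (T \ {t}) := ⟨hcs.1, fun h => hcs.2 h.1⟩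
      have inner : ∀ (d : V), d ∈ s \ T →
          (Res G (s \ (T \ {t}))).Reachable c d → R.Reachable c d := by
        intro d hd hr
        obtain ⟨p⟩ := hr
        by_cases hts : t ∈ p.support
        · exfalso
          set p1 := (p.takeUntil t hts).reverse with hp1
          have hcount : p1.support.count t = 1 := by
            rw [hp1, Walk.support_reverse, List.count_reverse]
            exact p.count_support_takeUntil_eq_one hts
          have hct : c ≠ t := fun h => (h ▸ hcs).2 ht
          obtain ⟨x, hadj, q, hq⟩ := Walk.exists_eq_cons_of_ne (Ne.symm hct) p1
          have hp1sup : ∀ z ∈ p1.support, z ∈ s \ (T \ {t}) := by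
            intro z hz
            rw [hp1, Walk.support_reverse, List.mem_reverse] at hz
            exact res_support_subset (p.takeUntil t hts) hcs' z hz
          have htq : t ∉ q.support := by
            have hsup : p1.support = t :: q.support := by rw [hq, Walk.support_cons]
            rw [hsup, List.count_cons_self] at hcount
            exact List.count_eq_zero.mp (by omega)
          have hqsup : ∀ z ∈ q.support, z ∈ s \ T := by
            intro z hz
            refine hsub' z (hp1sup z ?_) ?_
            · rw [hq, Walk.support_cons]; exact List.mem_cons_of_mem _ hz
            · exact fun h => htq (h ▸ hz)
          have hxA : x ∈ Comp c := by
            refine ⟨hqsup x q.start_mem_support, ?_⟩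
            exact ⟨(q.transfer R (res_edges_mem q hqsup)).reverse⟩
          exact hno x hxA hadj.1
        · refine ⟨p.transfer R (res_edges_mem p ?_)⟩
          intro z hz
          exact hsub' z (res_support_subset p hcs' z hz) (fun h => hts (h ▸ hz))
      have hreach' : (Res G (s \ (T \ {t}))).Reachable a b := by
        by_contra hr
        have hsep' : Sep (T \ {t}) := ⟨fun x hx => hT.1 hx.1, hr⟩
        have h1 := hTmin _ hsep'
        have h2 : (T \ {t}).ncard < T.ncard :=
          Set.ncard_diff_singleton_lt_of_mem ht T.toFinite
        omega
      rcases hc with rfl | rfl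
      · exact hT.2 (inner b hbT hreach')
      · exact hT.2 (inner a haT hreach'.symm).symm
    -- T is a clique
    have hTclique : ∀ t ∈ T, ∀ t' ∈ T, t ≠ t' → G.Adj t t' := by
      intro t ht t' ht' htt'
      by_contra hnadj'
      obtain ⟨x, hxA, htx⟩ := hnb t ht a (by simp)
      obtain ⟨y, hyA, hty⟩ := hnb t' ht' a (by simp)
      obtain ⟨x', hxB, htx'⟩ := hnb t ht b (by simp)
      obtain ⟨y', hyB, hty'⟩ := hnb t' ht' b (by simp)
      have key : ∀ (c : V), c ∈ ({a, b} : Set V) → ∀ x y, x ∈ Comp c → y ∈ Comp c →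
          G.Adj t x → G.Adj t' y →
          ∃ p : (Res G (Comp c ∪ {t, t'})).Walk t t', p.IsPath ∧
            (∀ q : (Res G (Comp c ∪ {t, t'})).Walk t t', p.length ≤ q.length) ∧
            2 ≤ p.length := by
        intro c hc x0 y0 hx0 hy0 htx0 hty0
        have hr : R.Reachable x0 y0 := hx0.2.symm.trans hy0.2
        obtain ⟨w0⟩ := hr
        have hw0 : ∀ z ∈ w0.support, z ∈ Comp c ∪ {t, t'} := by
          intro z hz
          exact Or.inl ⟨res_support_subset w0 hx0.1 z hz,
            hx0.2.trans ⟨w0.takeUntil z hz⟩⟩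
        have w1 : (Res G (Comp c ∪ {t, t'})).Walk x0 y0 :=
          w0.transfer _ (res_edges_mem w0 hw0)
        have hadj1 : (Res G (Comp c ∪ {t, t'})).Adj t x0 :=
          ⟨htx0, Or.inr (by simp), Or.inl hx0⟩
        have hadj2 : (Res G (Comp c ∪ {t, t'})).Adj y0 t' :=
          ⟨hty0.symm, Or.inl hy0, Or.inr (by simp)⟩
        obtain ⟨p, hp, hpmin⟩ :=
          exists_min_path ⟨Walk.cons hadj1 (w1.append (Walk.cons hadj2 Walk.nil))⟩
        refine ⟨p, hp, hpmin, ?_⟩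
        rcases Nat.lt_or_ge p.length 2 with hlt | hge
        · exfalso
          interval_cases hL : p.length
          · exact htt' (Walk.eq_of_length_eq_zero hL)
          · have hE := length_one_edges p hL
            have : (Res G (Comp c ∪ {t, t'})).Adj t t' :=
              p.adj_of_mem_edges (by rw [hE]; simp)
            exact hnadj' this.1
        · exact hge
      obtain ⟨p, hpPath, hpmin, hplen⟩ := key a (by simp) x y hxA hyA htx hty
      obtain ⟨q, hqPath, hqmin, hqlen⟩ := key b (by simp) x' y' hxB hyB htx' hty'
      have hpsup : ∀ z ∈ p.support, z ∈ Comp a ∪ {t, t'} :=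
        res_support_subset p (Or.inr (by simp))
      have hqsup : ∀ z ∈ q.support, z ∈ Comp b ∪ {t, t'} :=
        res_support_subset q (Or.inr (by simp))
      set P := p.transfer G (res_edges_mem_G p) with hPdef
      set Q := q.transfer G (res_edges_mem_G q) with hQdef
      set c0 : G.Walk t t := P.append Q.reverse with hc0def
      have hPp : P.IsPath := hpPath.transfer _
      have hQp : Q.IsPath := hqPath.transfer _
      have hPsup : P.support = p.support := Walk.support_transfer _ _
      have hQsup : Q.support = q.support := Walk.support_transfer _ _
      have hPe : P.edges = p.edges := Walk.edges_transfer _ _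
      have hQe : Q.edges = q.edges := Walk.edges_transfer _ _
      have hinter : ∀ z, z ∈ p.support → z ∈ q.support → z = t ∨ z = t' := by
        intro z hzp hzq
        rcases hqsup z hzq with hzB | hz'
        · rcases hpsup z hzp with hzA | hz
          · exact absurd hzB (fun h => hdisj z hzA h)
          · simpa using hz
        · simpa using hz'
      have hPQe : ∀ e, e ∈ p.edges → e ∈ q.edges → False := by
        intro e hep heq
        induction e with
        | _ z1 z2 =>
          have h1 := hinter z1 (p.fst_mem_support_of_mem_edges hep)
            (q.fst_mem_support_of_mem_edges heq)
          have h2 := hinter z2 (p.snd_mem_support_of_mem_edges hep)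
            (q.snd_mem_support_of_mem_edges heq)
          have hadj : G.Adj z1 z2 := (p.adj_of_mem_edges hep).1
          rcases h1 with rfl | rfl <;> rcases h2 with rfl | rfl
          · exact hadj.ne rfl
          · exact hnadj' hadj
          · exact hnadj' hadj.symm
          · exact hadj.ne rfl
      have hc0edges : c0.edges = p.edges ++ q.edges.reverse := by
        rw [hc0def, Walk.edges_append, Walk.edges_reverse, hPe, hQe]
      have hc0len : c0.length = p.length + q.length := by
        rw [hc0def, Walk.length_append, Walk.length_reverse,
          Walk.length_transfer, Walk.length_transfer]
      have hc0sup : c0.support = P.support ++ Q.reverse.support.tail := by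
        rw [hc0def, Walk.support_append]
      have hc0tail : c0.support.tail = p.support.tail ++ Q.reverse.support.tail := by
        rw [hc0sup, hPsup, p.support_eq_cons]
        rfl
      have hQrtail : ∀ z ∈ Q.reverse.support.tail, z ∈ q.support := by
        intro z hz
        have : z ∈ Q.reverse.support := List.mem_of_mem_tail hz
        rw [Walk.support_reverse, List.mem_reverse, hQsup] at this
        exact this
      have hcyc : c0.IsCycle := by
        refine ⟨⟨⟨?_⟩, ?_⟩, ?_⟩
        · rw [hc0edges, List.nodup_append]
          refine ⟨hpPath.edges_nodup, List.nodup_reverse.mpr hqPath.edges_nodup, ?_⟩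
          intro e he1 e' he2 hee
          subst hee
          exact hPQe e he1 (List.mem_reverse.mp he2)
        · intro h
          rw [h] at hc0len
          simp at hc0len
          omega
        · rw [hc0tail]
          rw [List.nodup_append]
          refine ⟨?_, ?_, ?_⟩
          · exact hpPath.support_nodup.sublist (List.tail_sublist _)
          · exact (hQp.reverse).support_nodup.sublist (List.tail_sublist _)
          · intro z hz1 z' hz2 hzz
            subst hzz
            have hzp : z ∈ p.support := List.mem_of_mem_tail hz1
            have hzq : z ∈ q.support := hQrtail z hz2
            rcases hinter z hzp hzq with rfl | rfl
            · have hnd := hpPath.support_nodup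
              rw [p.support_eq_cons] at hnd
              exact (List.nodup_cons.mp hnd).1 hz1
            · have hnd := (hQp.reverse).support_nodup
              rw [Q.reverse.support_eq_cons] at hnd
              exact (List.nodup_cons.mp hnd).1 hz2
      have hclen4 : 4 ≤ c0.length := by omega
      obtain ⟨u, w, huc, hwc, huw, hnedge⟩ := hG t c0 hcyc hclen4
      have hmem : ∀ z, z ∈ c0.support → z ∈ p.support ∨ z ∈ q.support := by
        intro z hz
        rw [hc0def] at hz
        rcases (Walk.mem_support_append_iff _ _).mp hz with h | h
        · left; rwa [hPsup] at h
        · right; rwa [Walk.support_reverse, List.mem_reverse, hQsup] at h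
      have hmixed : ∀ u' w', G.Adj u' w' → u' ∈ p.support → u' ∉ q.support →
          w' ∈ q.support → w' ∉ p.support → False := by
        intro u' w' hadj hup huq hwq hwp
        have huA : u' ∈ Comp a := by
          rcases hpsup u' hup with h | h
          · exact h
          · exfalso
            rcases (by simpa using h : u' = t ∨ u' = t') with rfl | rfl
            · exact huq q.start_mem_support
            · exact huq q.end_mem_support
        have hwB : w' ∈ Comp b := by
          rcases hqsup w' hwq with h | h
          · exact h
          · exfalso
            rcases (by simpa using h : w' = t ∨ w' = t') with rfl | rfl
            · exact hwp p.start_mem_support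
            · exact hwp p.end_mem_support
        exact hT.2 (huA.2.trans
          (Reachable.trans ⟨Walk.cons ⟨hadj, huA.1, hwB.1⟩ Walk.nil⟩ hwB.2.symm))
      have hedgeinP : s(u, w) ∈ p.edges → False := fun h =>
        hnedge (by rw [hc0edges]; exact List.mem_append_left _ h)
      have hedgeinQ : s(u, w) ∈ q.edges → False := fun h =>
        hnedge (by rw [hc0edges]; exact List.mem_append_right _ (List.mem_reverse.mpr h))
      by_cases hup : u ∈ p.support
      · by_cases hwp : w ∈ p.support
        · exact hedgeinP (chord_of_min p hpmin ⟨huw, hpsup u hup, hpsup w hwp⟩ hup hwp)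
        · have hwq : w ∈ q.support := (hmem w hwc).resolve_left hwp
          by_cases huq : u ∈ q.support
          · exact hedgeinQ (chord_of_min q hqmin ⟨huw, hqsup u huq, hqsup w hwq⟩ huq hwq)
          · exact hmixed u w huw hup huq hwq hwp
      · have huq : u ∈ q.support := (hmem u huc).resolve_left hup
        by_cases hwq : w ∈ q.support
        · exact hedgeinQ (chord_of_min q hqmin ⟨huw, hqsup u huq, hqsup w hwq⟩ huq hwq)
        · have hwp : w ∈ p.support := (hmem w hwc).resolve_right hwq
          exact hmixed w u huw.symm hwp hwq huq hup
    -- find a simplicial vertex in each component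
    have hkey2 : ∀ c ∈ ({a, b} : Set V), ∀ d, d ∈ s → d ∉ Comp c → d ∉ T →
        ∃ v ∈ Comp c, Simp G s v := by
      intro c hc d hd hdC hdT
      have hcC : c ∈ Comp c := by rcases hc with rfl | rfl; exacts [haA, hbB]
      set s' := Comp c ∪ T with hs'def
      have hs'sub : s' ⊆ s := by rintro z (hz | hz); exacts [hz.1.1, hTs hz]
      have hds' : d ∉ s' := by rintro (h | h); exacts [hdC h, hdT h]
      have hlt : s'.ncard < s.ncard :=
        Set.ncard_lt_ncard ⟨hs'sub, fun hsub => hds' (hsub hd)⟩ s.toFinite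
      have hlift : ∀ v ∈ Comp c, Simp G s' v → Simp G s v := by
        intro v hv hvs x hx y hy hvx hvy hxy
        have hmm : ∀ z, z ∈ s → G.Adj v z → z ∈ s' := by
          intro z hz hadj
          by_cases hzT : z ∈ T
          · exact Or.inr hzT
          · exact Or.inl ⟨⟨hz, hzT⟩,
              hv.2.trans ⟨Walk.cons ⟨hadj, hv.1, ⟨hz, hzT⟩⟩ Walk.nil⟩⟩
        exact hvs (hmm x hx hvx) (hmm y hy hvy) hvx hvy hxy
      rcases IH s' (by omega) ⟨c, Or.inl hcC⟩ with hcomp' |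
        ⟨v, hv, w, hw, hvw, hnadj2, hsv, hsw⟩
      · refine ⟨c, hcC, hlift c hcC ?_⟩
        intro x hx y hy _ _ hxy
        exact hcomp' x hx y hy hxy
      · have hone : v ∈ Comp c ∨ w ∈ Comp c := by
          by_contra hcon
          push_neg at hcon
          exact hnadj2 (hTclique v (hv.resolve_left hcon.1) w (hw.resolve_left hcon.2) hvw)
        rcases hone with h | h
        · exact ⟨v, h, hlift v h hsv⟩
        · exact ⟨w, h, hlift w h hsw⟩
    obtain ⟨v, hvA, hsv⟩ := hkey2 a (by simp) b hb (fun h => hT.2 h.2)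
      (fun h => (hT.1 h).2 (by simp))
    obtain ⟨w, hwB, hsw⟩ := hkey2 b (by simp) a ha (fun h => hT.2 h.2.symm)
      (fun h => (hT.1 h).2 (by simp))
    refine ⟨v, hvA.1.1, w, hwB.1.1, ?_, ?_, hsv, hsw⟩
    · rintro rfl
      exact hdisj v hvA hwB
    · intro hadj
      exact hT.2 (hvA.2.trans
        (Reachable.trans ⟨Walk.cons ⟨hadj, hvA.1, hwB.1⟩ Walk.nil⟩ hwB.2.symm))

end ChordalAux

/-- Every finite chordal graph with at least one vertex has a simplicial vertex:
a vertex whose neighborhood is a clique. -/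
theorem exists_simplicial_vertex_of_isChordal
    {V : Type*} [Fintype V] [Nonempty V] (G : SimpleGraph V) (hG : G.IsChordal) :
    ∃ v : V, G.IsClique (G.neighborSet v) := by
  classical
  rcases ChordalAux.aux G hG (Set.univ : Set V).ncard Set.univ le_rfl
      ⟨Classical.arbitrary V, trivial⟩ with h | ⟨v, _, w, _, _, _, hsv, _⟩
  · refine ⟨Classical.arbitrary V, fun x hx y hy hxy => ?_⟩
    exact h x trivial y trivial hxy
  · exact ⟨v, fun x hx y hy hxy => hsv trivial trivial hx hy hxy⟩
end
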